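/- Let y = (y_1, …, y_M) be a random vector of nonnegative random variables with finite third moments, and suppose that conditionally on y the coordinates x_1, …, x_M of x ∈ ℕ^M are independent with x_m | y ~ Poisson(y_m). Then for all indices m_1, m_2, m_3: cum(x_{m_1}, x_{m_2}, x_{m_3}) = cum(y_{m_1}, y_{m_2}, y_{m_3}) − 2δ(m_1,m_2,m_3) E(x_{m_1}) + δ(m_2,m_3) Cov(x_{m_1},x_{m_2}) + δ(m_1,m_3) Cov(x_{m_1},x_{m_2}) + δ(m_1,m_2) Cov(x_{m_1},x_{m_3}). -/

import Mathlib

open MeasureTheory ProbabilityTheory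

/-- Covariance of two real random variables. -/
noncomputable def covRV {Ω : Type*} [MeasurableSpace Ω] (P : Measure Ω) (f g : Ω → ℝ) : ℝ :=
  ∫ ω, (f ω - ∫ a, f a ∂P) * (g ω - ∫ a, g a ∂P) ∂P

/-- Third (joint) cumulant of three real random variables. -/
noncomputable def cum3RV {Ω : Type*} [MeasurableSpace Ω] (P : Measure Ω) (f g h : Ω → ℝ) : ℝ :=
  ∫ ω, (f ω - ∫ a, f a ∂P) * (g ω - ∫ a, g a ∂P) * (h ω - ∫ a, h a ∂P) ∂P

section Aux

open Real
open scoped NNReal ENNReal Nat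

lemma pois_hasSum_desc (r : ℝ≥0) (k : ℕ) :
    HasSum (fun n => poissonPMFReal r n * (n.descFactorial k : ℝ)) ((r:ℝ)^k) := by
  have h0 : ∀ n < k, poissonPMFReal r n * (n.descFactorial k : ℝ) = 0 := by
    intro n hn
    simp [Nat.descFactorial_eq_zero_iff_lt.2 hn]
  have key : ∀ n : ℕ, poissonPMFReal r (n + k) * ((n+k).descFactorial k : ℝ)
      = (r:ℝ)^k * poissonPMFReal r n := by
    intro n
    unfold poissonPMFReal
    have hd : ((n+k).descFactorial k : ℝ) * (n ! : ℝ) = ((n+k)! : ℝ) := by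
      rw [← Nat.cast_mul]
      norm_cast
      rw [Nat.add_descFactorial_eq_ascFactorial, mul_comm]
      exact Nat.factorial_mul_ascFactorial n k
    have hn : (n ! : ℝ) ≠ 0 := Nat.cast_ne_zero.2 (Nat.factorial_ne_zero n)
    have hnk : ((n+k)! : ℝ) ≠ 0 := Nat.cast_ne_zero.2 (Nat.factorial_ne_zero _)
    field_simp
    rw [mul_assoc, hd]
    ring
  have h1 : HasSum (fun n => poissonPMFReal r (n + k) * ((n+k).descFactorial k : ℝ))
      ((r:ℝ)^k) := by
    simp_rw [key]
    simpa [poissonPMFReal] using (poissonPMFRealSum r).mul_left ((r:ℝ)^k)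
  refine (hasSum_nat_add_iff' (f := fun n => poissonPMFReal r n * (n.descFactorial k : ℝ)) k).1 ?_
  rw [Finset.sum_eq_zero (fun i hi => h0 i (Finset.mem_range.1 hi))]
  simpa using h1

lemma pois_integral (r : ℝ≥0) (f : ℕ → ℝ) (hf0 : ∀ n, 0 ≤ f n) {S : ℝ}
    (h : HasSum (fun n => poissonPMFReal r n * f n) S) :
    Integrable f (poissonMeasure r) ∧ ∫ n, f n ∂(poissonMeasure r) = S := by
  have hmeas : ∀ n : ℕ, poissonMeasure r {n} = ENNReal.ofReal (poissonPMFReal r n) := by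
    intro n
    rw [poissonMeasure_singleton]
    rfl
  have hint : Integrable f (poissonMeasure r) := by
    refine ⟨Measurable.aestronglyMeasurable (by exact measurable_from_nat), ?_⟩
    rw [hasFiniteIntegral_iff_norm]
    calc ∫⁻ n, ENNReal.ofReal ‖f n‖ ∂(poissonMeasure r)
        = ∑' n, ENNReal.ofReal ‖f n‖ * poissonMeasure r {n} := lintegral_countable' _
      _ = ∑' n, ENNReal.ofReal (poissonPMFReal r n * f n) := by
          congr 1; funext n
          rw [hmeas n, norm_of_nonneg (hf0 n), ← ENNReal.ofReal_mul (hf0 n)]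
          ring_nf
      _ = ENNReal.ofReal S := by
          rw [← ENNReal.ofReal_tsum_of_nonneg (fun n => mul_nonneg poissonPMFReal_nonneg (hf0 n))
            h.summable, h.tsum_eq]
      _ < ⊤ := ENNReal.ofReal_lt_top
  refine ⟨hint, ?_⟩
  rw [integral_countable' hint]
  rw [← h.tsum_eq]
  congr 1; funext n
  rw [smul_eq_mul, poissonMeasure_real_singleton]
  rfl

noncomputable def momR (t : ℝ) : ℕ → ℝ
  | 0 => 1
  | 1 => t
  | 2 => t^2 + t
  | 3 => t^3 + 3*t^2 + t
  | _ => 0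

lemma desc_cast (n : ℕ) : ((n.descFactorial 2 : ℝ) = (n:ℝ)^2 - n)
    ∧ ((n.descFactorial 3 : ℝ) = (n:ℝ)^3 - 3*(n:ℝ)^2 + 2*n) := by
  match n with
  | 0 => norm_num [Nat.descFactorial]
  | 1 => norm_num [Nat.descFactorial]
  | (m+2) =>
    simp only [Nat.descFactorial]
    push_cast
    constructor <;> ring

lemma pois_hasSum_pow (r : ℝ≥0) (k : ℕ) (hk : k ≤ 3) :
    HasSum (fun n => poissonPMFReal r n * ((n:ℝ))^k) (momR (r:ℝ) k) := by
  interval_cases k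
  · simpa [momR, poissonPMFReal] using (poissonPMFRealSum r)
  · simpa [momR] using pois_hasSum_desc r 1
  · have := (pois_hasSum_desc r 2).add (pois_hasSum_desc r 1)
    simp only [momR]
    convert this using 2 with n
    · rw [(desc_cast n).1]; simp; ring
    · ring
  · have := ((pois_hasSum_desc r 3).add ((pois_hasSum_desc r 2).mul_left 3)).add
      (pois_hasSum_desc r 1)
    simp only [momR]
    convert this using 2 with n
    · rw [(desc_cast n).1, (desc_cast n).2]; simp; ring
    · ring

lemma pi_integral {M : ℕ} (ν : Fin M → Measure ℕ) [h : ∀ i, IsProbabilityMeasure (ν i)]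
    (f : Fin M → ℕ → ℝ) (hf : ∀ i, Integrable (f i) (ν i)) :
    Integrable (fun x => ∏ i, f i (x i)) (Measure.pi ν) ∧
      ∫ x, ∏ i, f i (x i) ∂(Measure.pi ν) = ∏ i, ∫ x, f i x ∂(ν i) := by
  letI ms : ∀ i : Fin M, MeasureSpace ℕ := fun i => ⟨ν i⟩
  have hsf : ∀ i : Fin M, SigmaFinite (@volume ℕ (ms i)) := fun i => by
    change SigmaFinite (ν i); infer_instance
  constructor
  · exact Integrable.fintype_prod_dep hf
  · exact MeasureTheory.integral_fin_nat_prod_eq_prod f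

lemma meas_apply_countable {β : Type*} [MeasurableSpace β] [Countable β]
    [MeasurableSingletonClass β] (μ : Measure β) (t : Set β) (ht : MeasurableSet t) :
    μ t = ∑' n, t.indicator (fun n => μ {n}) n := by
  rw [← lintegral_indicator_one ht, lintegral_countable']
  congr 1; funext n; by_cases h : n ∈ t <;> simp [h]

lemma meas_pmf_param (k : ℕ) :
    Measurable (fun t : ℝ => ENNReal.ofReal (poissonPMFReal t.toNNReal k)) := by
  apply ENNReal.measurable_ofReal.comp
  unfold poissonPMFReal
  fun_prop

noncomputable def nu {M : ℕ} (v : Fin M → ℝ) : Measure (Fin M → ℕ) :=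
  Measure.pi fun m => poissonMeasure (v m).toNNReal

instance {M : ℕ} (v : Fin M → ℝ) : IsProbabilityMeasure (nu v) := by
  unfold nu; infer_instance

lemma nu_singleton {M : ℕ} (v : Fin M → ℝ) (n : Fin M → ℕ) :
    nu v {n} = ∏ m, ENNReal.ofReal (poissonPMFReal (v m).toNNReal (n m)) := by
  rw [nu, ← Set.univ_pi_singleton n, Measure.pi_pi]
  congr 1; funext m
  rw [poissonMeasure_singleton]
  rfl

lemma meas_nu_singleton {M : ℕ} (n : Fin M → ℕ) :
    Measurable (fun v : Fin M → ℝ => nu v {n}) := by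
  simp_rw [nu_singleton]
  exact Finset.measurable_prod _ fun m _ =>
    (meas_pmf_param (n m)).comp (measurable_pi_apply m)

lemma meas_nu_apply {M : ℕ} (s : Set (Fin M → ℕ)) :
    Measurable (fun v : Fin M → ℝ => nu v s) := by
  have hs : MeasurableSet s := s.to_countable.measurableSet
  simp_rw [meas_apply_countable _ s hs]
  refine Measurable.ennreal_tsum fun n => ?_
  by_cases h : n ∈ s <;> simp [h, meas_nu_singleton n]

noncomputable def kap {M : ℕ} (v : Fin M → ℝ) : Measure ((Fin M → ℝ) × (Fin M → ℕ)) :=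
  (nu v).map (fun n => (v, n))

instance {M : ℕ} (v : Fin M → ℝ) : IsProbabilityMeasure (kap v) := by
  unfold kap; exact Measure.isProbabilityMeasure_map (measurable_prodMk_left.aemeasurable)

lemma kap_apply {M : ℕ} (v : Fin M → ℝ) {s : Set ((Fin M → ℝ) × (Fin M → ℕ))}
    (hs : MeasurableSet s) : kap v s = nu v {n | (v, n) ∈ s} := by
  rw [kap, Measure.map_apply measurable_prodMk_left hs]; rfl

lemma meas_kap {M : ℕ} : Measurable (kap (M := M)) := by
  refine Measure.measurable_of_measurable_coe _ fun s hs => ?_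
  simp_rw [fun v => kap_apply v hs]
  have key : ∀ v : Fin M → ℝ, nu v {n | (v, n) ∈ s}
      = ∑' n, Set.indicator {v' | (v', n) ∈ s} (fun v' => nu v' {n}) v := by
    intro v
    rw [meas_apply_countable _ _ (Set.to_countable _).measurableSet]
    refine tsum_congr fun n => ?_
    by_cases h : (v, n) ∈ s <;> simp [h, Set.indicator]
  simp_rw [key]
  refine Measurable.ennreal_tsum fun n => ?_
  refine (meas_nu_singleton n).indicator ?_
  exact measurable_prodMk_right hs

lemma bind_integral {α β : Type*} [MeasurableSpace α] [MeasurableSpace β]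
    (μ : Measure α) [IsProbabilityMeasure μ] (κ : α → Measure β) (hκ : Measurable κ)
    (f : β → ℝ) (hf : Measurable f) (hf0 : ∀ x, 0 ≤ f x)
    (G : α → ℝ) (hG : Measurable G)
    (hfint : ∀ v, Integrable f (κ v)) (hGf : ∀ v, ∫ x, f x ∂(κ v) = G v)
    (hGint : Integrable G μ) :
    Integrable f (μ.bind κ) ∧ ∫ x, f x ∂(μ.bind κ) = ∫ v, G v ∂μ := by
  have hG0 : ∀ v, 0 ≤ G v := fun v => (hGf v) ▸ integral_nonneg hf0
  have hlin : ∀ v, ∫⁻ x, ENNReal.ofReal (f x) ∂(κ v) = ENNReal.ofReal (G v) := by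
    intro v
    rw [← ofReal_integral_eq_lintegral_ofReal (hfint v) (Filter.Eventually.of_forall hf0), hGf v]
  have hbl : ∫⁻ x, ENNReal.ofReal (f x) ∂(μ.bind κ) = ENNReal.ofReal (∫ v, G v ∂μ) := by
    rw [show (fun x => ENNReal.ofReal (f x)) = ENNReal.ofReal ∘ f from rfl,
      Measure.lintegral_bind hκ.aemeasurable (ENNReal.measurable_ofReal.comp hf).aemeasurable]
    simp only [Function.comp]
    simp_rw [hlin]
    rw [← ofReal_integral_eq_lintegral_ofReal hGint (Filter.Eventually.of_forall hG0)]
  have hint : Integrable f (μ.bind κ) := by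
    refine ⟨hf.aestronglyMeasurable, ?_⟩
    rw [hasFiniteIntegral_iff_norm]
    calc ∫⁻ x, ENNReal.ofReal ‖f x‖ ∂(μ.bind κ)
        = ∫⁻ x, ENNReal.ofReal (f x) ∂(μ.bind κ) := by
          congr 1; funext x; rw [norm_of_nonneg (hf0 x)]
      _ < ⊤ := by rw [hbl]; exact ENNReal.ofReal_lt_top
  refine ⟨hint, ?_⟩
  rw [integral_eq_lintegral_of_nonneg_ae (Filter.Eventually.of_forall hf0)
    hf.aestronglyMeasurable, hbl, ENNReal.toReal_ofReal (integral_nonneg hG0)]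

lemma enn1 : 1 / (3/2 : ℝ≥0∞) = 1/3 + 1/3 := by
  rw [one_div, ENNReal.inv_div (by norm_num) (by norm_num), ENNReal.div_add_div_same]
  norm_num

lemma enn2 : 1 / (1 : ℝ≥0∞) = 1/(3/2) + 1/3 := by
  rw [one_div, inv_one, one_div, ENNReal.inv_div (by norm_num) (by norm_num),
    ENNReal.div_add_div_same]
  norm_num
  exact (ENNReal.div_self (by norm_num) (by norm_num)).symm

lemma int_prods {α : Type*} [MeasurableSpace α] (μ : Measure α) [IsProbabilityMeasure μ]
    (f g h : α → ℝ) (hf : MemLp f 3 μ) (hg : MemLp g 3 μ) (hh : MemLp h 3 μ) :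
    Integrable f μ ∧ Integrable (fun x => f x * g x) μ ∧
      Integrable (fun x => f x * g x * h x) μ := by
  have h2 : MemLp (fun x => f x * g x) (3/2) μ :=
    haveI : ENNReal.HolderTriple 3 3 (3/2) := ⟨by simpa only [one_div] using enn1.symm⟩
    MemLp.smul hg hf
  have h1 : MemLp (fun x => f x * g x * h x) 1 μ :=
    haveI : ENNReal.HolderTriple (3/2) 3 1 := ⟨by simpa only [one_div] using enn2.symm⟩
    MemLp.smul hh h2
  have h32 : (1:ℝ≥0∞) ≤ 3/2 := by
    rw [ENNReal.le_div_iff_mul_le (by norm_num) (by norm_num)]; norm_num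
  exact ⟨(hf.mono_exponent (by norm_num)).integrable le_rfl,
    (h2.mono_exponent h32).integrable le_rfl, h1.integrable le_rfl⟩

lemma cov_expand {Ω : Type*} [MeasurableSpace Ω] (P : Measure Ω) [IsProbabilityMeasure P]
    (f g : Ω → ℝ) (hf : Integrable f P) (hg : Integrable g P)
    (hfg : Integrable (fun ω => f ω * g ω) P) :
    covRV P f g = (∫ ω, f ω * g ω ∂P) - (∫ ω, f ω ∂P) * (∫ ω, g ω ∂P) := by
  set a := ∫ ω, f ω ∂P with ha
  set b := ∫ ω, g ω ∂P with hb
  have key : (fun ω => (f ω - a) * (g ω - b))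
      = fun ω => f ω * g ω - b * f ω - a * g ω + a * b := by funext ω; ring
  rw [covRV, ← ha, ← hb, key]
  have j1 : Integrable (fun ω => f ω * g ω - b * f ω) P := hfg.sub (hf.const_mul b)
  have j2 : Integrable (fun ω => f ω * g ω - b * f ω - a * g ω) P := j1.sub (hg.const_mul a)
  rw [integral_add j2 (integrable_const _), integral_sub j1 (hg.const_mul a),
    integral_sub hfg (hf.const_mul b), integral_const_mul, integral_const_mul, integral_const]
  simp [← ha, ← hb]
  ring

lemma cum3_expand {Ω : Type*} [MeasurableSpace Ω] (P : Measure Ω) [IsProbabilityMeasure P]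
    (f g h : Ω → ℝ) (hf : Integrable f P) (hg : Integrable g P) (hh : Integrable h P)
    (hfg : Integrable (fun ω => f ω * g ω) P) (hfh : Integrable (fun ω => f ω * h ω) P)
    (hgh : Integrable (fun ω => g ω * h ω) P)
    (hfgh : Integrable (fun ω => f ω * g ω * h ω) P) :
    cum3RV P f g h = (∫ ω, f ω * g ω * h ω ∂P)
      - (∫ ω, f ω ∂P) * (∫ ω, g ω * h ω ∂P)
      - (∫ ω, g ω ∂P) * (∫ ω, f ω * h ω ∂P)
      - (∫ ω, h ω ∂P) * (∫ ω, f ω * g ω ∂P)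
      + 2 * (∫ ω, f ω ∂P) * (∫ ω, g ω ∂P) * (∫ ω, h ω ∂P) := by
  set a := ∫ ω, f ω ∂P with ha
  set b := ∫ ω, g ω ∂P with hb
  set c := ∫ ω, h ω ∂P with hc
  have key : (fun ω => (f ω - a) * (g ω - b) * (h ω - c))
      = fun ω => f ω * g ω * h ω - c * (f ω * g ω) - b * (f ω * h ω) - a * (g ω * h ω)
          + (b*c) * f ω + (a*c) * g ω + (a*b) * h ω + (-(a*b*c)) := by funext ω; ring
  rw [cum3RV, ← ha, ← hb, ← hc, key]
  have i0 : Integrable (fun ω => f ω * g ω * h ω - c * (f ω * g ω)) P := hfgh.sub (hfg.const_mul c)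
  have i1 : Integrable (fun ω => f ω * g ω * h ω - c * (f ω * g ω) - b * (f ω * h ω)) P :=
    i0.sub (hfh.const_mul b)
  have i2 : Integrable (fun ω => f ω * g ω * h ω - c * (f ω * g ω) - b * (f ω * h ω)
      - a * (g ω * h ω)) P := i1.sub (hgh.const_mul a)
  have i3 : Integrable (fun ω => f ω * g ω * h ω - c * (f ω * g ω) - b * (f ω * h ω)
      - a * (g ω * h ω) + (b*c) * f ω) P := i2.add (hf.const_mul (b*c))
  have i4 : Integrable (fun ω => f ω * g ω * h ω - c * (f ω * g ω) - b * (f ω * h ω)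
      - a * (g ω * h ω) + (b*c) * f ω + (a*c) * g ω) P := i3.add (hg.const_mul (a*c))
  have i5 : Integrable (fun ω => f ω * g ω * h ω - c * (f ω * g ω) - b * (f ω * h ω)
      - a * (g ω * h ω) + (b*c) * f ω + (a*c) * g ω + (a*b) * h ω) P := i4.add (hh.const_mul (a*b))
  rw [integral_add i5 (integrable_const _), integral_add i4 (hh.const_mul (a*b)),
    integral_add i3 (hg.const_mul (a*c)), integral_add i2 (hf.const_mul (b*c)),
    integral_sub i1 (hgh.const_mul a), integral_sub i0 (hfh.const_mul b),
    integral_sub hfgh (hfg.const_mul c)]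
  simp only [integral_const_mul, integral_const, probReal_univ, measure_univ, ENNReal.toReal_one, one_smul,
    smul_eq_mul]
  rw [← ha, ← hb, ← hc]
  ring

lemma prod_pow_delta {M : ℕ} (a : Fin M) (g : Fin M → ℝ) :
    ∏ m, (g m)^(if m = a then 1 else 0) = g a := by
  simp only [pow_ite, pow_one, pow_zero]
  simp [Finset.prod_ite_eq']

lemma prod_pow_delta2 {M : ℕ} (a b : Fin M) (g : Fin M → ℝ) :
    ∏ m, (g m)^((if m = a then 1 else 0) + (if m = b then 1 else 0)) = g a * g b := by
  simp_rw [pow_add, Finset.prod_mul_distrib, prod_pow_delta]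

lemma prod_pow_delta3 {M : ℕ} (a b c : Fin M) (g : Fin M → ℝ) :
    ∏ m, (g m)^((if m = a then 1 else 0) + ((if m = b then 1 else 0)
      + (if m = c then 1 else 0))) = g a * (g b * g c) := by
  simp_rw [pow_add, Finset.prod_mul_distrib, prod_pow_delta]

lemma prod_eq_one_single {M : ℕ} (a : Fin M) (F : Fin M → ℝ)
    (hF : ∀ m, m ≠ a → F m = 1) : ∏ m, F m = F a := Finset.prod_eq_single_of_mem a
  (Finset.mem_univ a) (fun m _ hm => hF m hm)

lemma prod_eq_one_pair {M : ℕ} {a c : Fin M} (hac : a ≠ c) (F : Fin M → ℝ)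
    (hF : ∀ m, m ≠ a → m ≠ c → F m = 1) : ∏ m, F m = F a * F c := by
  rw [← Finset.prod_subset (Finset.subset_univ {a, c})
    (fun m _ hm => by
      simp only [Finset.mem_insert, Finset.mem_singleton] at hm
      push_neg at hm
      exact hF m hm.1 hm.2),
    Finset.prod_pair hac]

lemma prod_eq_one_triple {M : ℕ} {a b c : Fin M} (hab : a ≠ b) (hac : a ≠ c) (hbc : b ≠ c)
    (F : Fin M → ℝ) (hF : ∀ m, m ≠ a → m ≠ b → m ≠ c → F m = 1) :
    ∏ m, F m = F a * F b * F c := by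
  rw [← Finset.prod_subset (Finset.subset_univ {a, b, c})
    (fun m _ hm => by
      simp only [Finset.mem_insert, Finset.mem_singleton] at hm
      push_neg at hm
      exact hF m hm.1 hm.2.1 hm.2.2)]
  rw [Finset.prod_insert (by simp [hab, hac]), Finset.prod_pair hbc, mul_assoc]

lemma meas_momR (k : ℕ) : Measurable fun t : ℝ => momR (max t 0) k := by
  rcases k with _|_|_|_|k <;> simp only [momR] <;> fun_prop

lemma nu_moment {M : ℕ} (v : Fin M → ℝ) (e : Fin M → ℕ) (he : ∀ m, e m ≤ 3) :
    Integrable (fun n : Fin M → ℕ => ∏ m, ((n m : ℝ))^(e m)) (nu v) ∧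
      ∫ n, ∏ m, ((n m : ℝ))^(e m) ∂(nu v) = ∏ m, momR (max (v m) 0) (e m) := by
  have hone : ∀ m : Fin M, Integrable (fun x : ℕ => ((x:ℝ))^(e m))
        (poissonMeasure (v m).toNNReal) ∧
      ∫ x : ℕ, ((x:ℝ))^(e m) ∂(poissonMeasure (v m).toNNReal)
        = momR (((v m).toNNReal : ℝ)) (e m) :=
    fun m => pois_integral _ _ (fun n => pow_nonneg (Nat.cast_nonneg n) _)
      (pois_hasSum_pow _ _ (he m))
  have h := pi_integral (fun m => poissonMeasure (v m).toNNReal)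
    (fun m x => ((x:ℝ))^(e m)) (fun m => (hone m).1)
  refine ⟨h.1, ?_⟩
  rw [show nu v = Measure.pi (fun m => poissonMeasure (v m).toNNReal) from rfl, h.2]
  exact Finset.prod_congr rfl fun m _ => by rw [(hone m).2, Real.coe_toNNReal']

lemma P_moment {M : ℕ} (μ : Measure (Fin M → ℝ)) [IsProbabilityMeasure μ]
    (e : Fin M → ℕ) (he : ∀ m, e m ≤ 3)
    (hGint : Integrable (fun v => ∏ m, momR (max (v m) 0) (e m)) μ) :
    Integrable (fun ω : (Fin M → ℝ) × (Fin M → ℕ) => ∏ m, ((ω.2 m : ℝ))^(e m)) (μ.bind kap) ∧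
      ∫ ω, ∏ m, ((ω.2 m : ℝ))^(e m) ∂(μ.bind kap)
        = ∫ v, ∏ m, momR (max (v m) 0) (e m) ∂μ := by
  have hfmeas : Measurable (fun ω : (Fin M → ℝ) × (Fin M → ℕ) => ∏ m, ((ω.2 m : ℝ))^(e m)) :=
    Finset.measurable_prod _ fun m _ =>
      (measurable_from_nat (f := fun n : ℕ => ((n:ℝ))^(e m))).comp
        ((measurable_pi_apply m).comp measurable_snd)
  refine bind_integral μ kap meas_kap _ hfmeas
    (fun ω => Finset.prod_nonneg fun m _ => pow_nonneg (Nat.cast_nonneg _) _)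
    _ (Finset.measurable_prod _ fun m _ => (meas_momR (e m)).comp (measurable_pi_apply m))
    (fun v => ?_) (fun v => ?_) hGint
  · rw [show kap v = (nu v).map (fun n => (v, n)) from rfl]
    rw [integrable_map_measure hfmeas.aestronglyMeasurable measurable_prodMk_left.aemeasurable]
    exact (nu_moment v e he).1
  · rw [show kap v = (nu v).map (fun n => (v, n)) from rfl,
      integral_map measurable_prodMk_left.aemeasurable hfmeas.aestronglyMeasurable]
    exact (nu_moment v e he).2

lemma map_fst_bind {M : ℕ} (μ : Measure (Fin M → ℝ)) [IsProbabilityMeasure μ] :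
    (μ.bind kap).map Prod.fst = μ := by
  ext s hs
  rw [Measure.map_apply measurable_fst hs,
    Measure.bind_apply (measurable_fst hs) meas_kap.aemeasurable]
  have : ∀ v : Fin M → ℝ, kap v (Prod.fst ⁻¹' s) = s.indicator 1 v := by
    intro v
    rw [kap_apply v (measurable_fst hs)]
    by_cases h : v ∈ s
    · simp only [Set.indicator_of_mem h]
      rw [show {n : Fin M → ℕ | (v, n) ∈ Prod.fst ⁻¹' s} = Set.univ from
        Set.eq_univ_of_forall fun n => h]
      exact measure_univ
    · simp only [Set.indicator_of_notMem h]
      rw [show {n : Fin M → ℕ | (v, n) ∈ Prod.fst ⁻¹' s} = ∅ from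
        Set.eq_empty_of_forall_notMem fun n hn => h hn]
      exact measure_empty
  simp_rw [this]
  rw [lintegral_indicator_one hs]

lemma isProb_bind {M : ℕ} (μ : Measure (Fin M → ℝ)) [IsProbabilityMeasure μ] :
    IsProbabilityMeasure (μ.bind kap) := by
  constructor
  rw [Measure.bind_apply MeasurableSet.univ meas_kap.aemeasurable]
  simp [measure_univ]

end Aux
/-- If, conditionally on a nonnegative random vector `y` with finite third
moments, the coordinates of `x ∈ ℕ^M` are independent with `x_m | y ~ Poisson(y_m)`, then
`cum(x_{m₁},x_{m₂},x_{m₃}) = cum(y_{m₁},y_{m₂},y_{m₃}) − 2δ(m₁,m₂,m₃) E(x_{m₁})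
 + δ(m₂,m₃) Cov(x_{m₁},x_{m₂}) + δ(m₁,m₃) Cov(x_{m₁},x_{m₂}) + δ(m₁,m₂) Cov(x_{m₁},x_{m₃})`. -/
theorem cum3_of_conditionally_poisson
    (M : ℕ) (hM : 1 ≤ M)
    (μ : Measure (Fin M → ℝ)) [IsProbabilityMeasure μ]
    (hnonneg : ∀ᵐ v ∂μ, ∀ m, 0 ≤ v m)
    (hL3 : ∀ m, MemLp (fun v => v m) 3 μ)
    (P : Measure ((Fin M → ℝ) × (Fin M → ℕ)))
    (hP : P = μ.bind (fun v =>
      (Measure.pi fun m : Fin M => poissonMeasure (v m).toNNReal).map (fun n => (v, n)))) :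
    ∀ m1 m2 m3 : Fin M,
      cum3RV P (fun ω => (ω.2 m1 : ℝ)) (fun ω => (ω.2 m2 : ℝ)) (fun ω => (ω.2 m3 : ℝ))
        = cum3RV P (fun ω => ω.1 m1) (fun ω => ω.1 m2) (fun ω => ω.1 m3)
          - 2 * (if m1 = m2 ∧ m2 = m3 then 1 else 0) * (∫ ω, (ω.2 m1 : ℝ) ∂P)
          + (if m2 = m3 then 1 else 0)
              * covRV P (fun ω => (ω.2 m1 : ℝ)) (fun ω => (ω.2 m2 : ℝ))
          + (if m1 = m3 then 1 else 0)
              * covRV P (fun ω => (ω.2 m1 : ℝ)) (fun ω => (ω.2 m2 : ℝ))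
          + (if m1 = m2 then 1 else 0)
              * covRV P (fun ω => (ω.2 m1 : ℝ)) (fun ω => (ω.2 m3 : ℝ)) := by
  intro m1 m2 m3
  have hPK : P = μ.bind kap := hP
  haveI hPprob : IsProbabilityMeasure P := by rw [hPK]; exact isProb_bind μ
  have hPfst : P.map Prod.fst = μ := by rw [hPK]; exact map_fst_bind μ
  -- basic integrability over μ
  have hmu1 : ∀ i, Integrable (fun v : Fin M → ℝ => v i) μ := fun i =>
    (int_prods μ _ _ _ (hL3 i) (hL3 i) (hL3 i)).1
  have hmu2 : ∀ i j, Integrable (fun v : Fin M → ℝ => v i * v j) μ := fun i j =>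
    (int_prods μ _ _ _ (hL3 i) (hL3 j) (hL3 j)).2.1
  have hmu3 : ∀ i j k, Integrable (fun v : Fin M → ℝ => v i * v j * v k) μ := fun i j k =>
    (int_prods μ _ _ _ (hL3 i) (hL3 j) (hL3 k)).2.2
  -- master moment lemma
  have key : ∀ (e : Fin M → ℕ), (∀ m, e m ≤ 3) →
      ∀ (φ : (Fin M → ℝ) × (Fin M → ℕ) → ℝ), (∀ ω, φ ω = ∏ m, ((ω.2 m : ℝ))^(e m)) →
      ∀ (G : (Fin M → ℝ) → ℝ), (∀ v, (∏ m, momR (v m) (e m)) = G v) → Integrable G μ →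
      Integrable φ P ∧ ∫ ω, φ ω ∂P = ∫ v, G v ∂μ := by
    intro e he φ hφ G hG hGint
    have hae : (fun v => ∏ m, momR (max (v m) 0) (e m)) =ᵐ[μ] G := by
      filter_upwards [hnonneg] with v hv
      rw [← hG v]
      exact Finset.prod_congr rfl fun m _ => by rw [max_eq_left (hv m)]
    have h := P_moment μ e he (hGint.congr hae.symm)
    constructor
    · rw [hPK]
      exact h.1.congr (Filter.Eventually.of_forall fun ω => (hφ ω).symm)
    · rw [hPK, integral_congr_ae (Filter.Eventually.of_forall hφ), h.2, integral_congr_ae hae]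
  -- first moments
  have key1 : ∀ i, Integrable (fun ω : (Fin M → ℝ) × (Fin M → ℕ) => (ω.2 i : ℝ)) P ∧
      (∫ ω : (Fin M → ℝ) × (Fin M → ℕ), (ω.2 i : ℝ) ∂P) = ∫ v, v i ∂μ := by
    intro i
    refine key (fun m => if m = i then 1 else 0) (fun m => by split <;> norm_num) _
      (fun ω => (prod_pow_delta i _).symm) _ (fun v => ?_) (hmu1 i)
    rw [prod_eq_one_single i _ (fun m hm => by simp [hm, momR])]
    simp [momR]
  -- second moments, distinct indices
  have key2 : ∀ i j : Fin M, i ≠ j →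
      Integrable (fun ω : (Fin M → ℝ) × (Fin M → ℕ) => (ω.2 i : ℝ) * (ω.2 j : ℝ)) P ∧
      (∫ ω : (Fin M → ℝ) × (Fin M → ℕ), (ω.2 i : ℝ) * (ω.2 j : ℝ) ∂P)
        = ∫ v, v i * v j ∂μ := by
    intro i j hij
    refine key (fun m => (if m = i then 1 else 0) + (if m = j then 1 else 0))
      (fun m => by split <;> split <;> norm_num) _
      (fun ω => (prod_pow_delta2 i j _).symm) _ (fun v => ?_) (hmu2 i j)
    rw [prod_eq_one_pair hij _ (fun m hm1 hm2 => by simp [hm1, hm2, momR])]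
    simp [momR, hij, Ne.symm hij]
  -- second moment, equal indices
  have key2s : ∀ i : Fin M,
      Integrable (fun ω : (Fin M → ℝ) × (Fin M → ℕ) => (ω.2 i : ℝ) * (ω.2 i : ℝ)) P ∧
      (∫ ω : (Fin M → ℝ) × (Fin M → ℕ), (ω.2 i : ℝ) * (ω.2 i : ℝ) ∂P)
        = ∫ v, (v i * v i + v i) ∂μ := by
    intro i
    refine key (fun m => (if m = i then 1 else 0) + (if m = i then 1 else 0))
      (fun m => by split <;> norm_num) _
      (fun ω => (prod_pow_delta2 i i _).symm) _ (fun v => ?_) ((hmu2 i i).add (hmu1 i))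
    rw [prod_eq_one_single i _ (fun m hm => by simp [hm, momR])]
    norm_num [momR]
    ring
  -- third moments: all distinct
  have key3d : ∀ i j k : Fin M, i ≠ j → i ≠ k → j ≠ k →
      Integrable (fun ω : (Fin M → ℝ) × (Fin M → ℕ) =>
        (ω.2 i : ℝ) * (ω.2 j : ℝ) * (ω.2 k : ℝ)) P ∧
      (∫ ω : (Fin M → ℝ) × (Fin M → ℕ), (ω.2 i : ℝ) * (ω.2 j : ℝ) * (ω.2 k : ℝ) ∂P)
        = ∫ v, v i * v j * v k ∂μ := by
    intro i j k hij hik hjk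
    refine key (fun m => (if m = i then 1 else 0) + ((if m = j then 1 else 0)
        + (if m = k then 1 else 0)))
      (fun m => by split <;> split <;> split <;> norm_num) _
      (fun ω => by rw [prod_pow_delta3 i j k]; ring) _ (fun v => ?_) (hmu3 i j k)
    rw [prod_eq_one_triple hij hik hjk _
      (fun m hm1 hm2 hm3 => by simp [hm1, hm2, hm3, momR])]
    simp [momR, hij, hik, hjk, Ne.symm hij, Ne.symm hik, Ne.symm hjk]
  -- third moments: pattern (i,i,j)
  have key3a : ∀ i j : Fin M, i ≠ j →
      Integrable (fun ω : (Fin M → ℝ) × (Fin M → ℕ) =>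
        (ω.2 i : ℝ) * (ω.2 i : ℝ) * (ω.2 j : ℝ)) P ∧
      (∫ ω : (Fin M → ℝ) × (Fin M → ℕ), (ω.2 i : ℝ) * (ω.2 i : ℝ) * (ω.2 j : ℝ) ∂P)
        = ∫ v, (v i * v i * v j + v i * v j) ∂μ := by
    intro i j hij
    refine key (fun m => (if m = i then 1 else 0) + ((if m = i then 1 else 0)
        + (if m = j then 1 else 0)))
      (fun m => by split <;> split <;> norm_num) _
      (fun ω => by rw [prod_pow_delta3 i i j]; ring) _ (fun v => ?_)
      ((hmu3 i i j).add (hmu2 i j))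
    rw [prod_eq_one_pair hij _ (fun m hm1 hm2 => by simp [hm1, hm2, momR])]
    norm_num [momR, hij, Ne.symm hij]
    ring
  -- third moments: pattern (i,j,i)
  have key3b : ∀ i j : Fin M, i ≠ j →
      Integrable (fun ω : (Fin M → ℝ) × (Fin M → ℕ) =>
        (ω.2 i : ℝ) * (ω.2 j : ℝ) * (ω.2 i : ℝ)) P ∧
      (∫ ω : (Fin M → ℝ) × (Fin M → ℕ), (ω.2 i : ℝ) * (ω.2 j : ℝ) * (ω.2 i : ℝ) ∂P)
        = ∫ v, (v i * v j * v i + v i * v j) ∂μ := by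
    intro i j hij
    refine key (fun m => (if m = i then 1 else 0) + ((if m = j then 1 else 0)
        + (if m = i then 1 else 0)))
      (fun m => by split <;> split <;> norm_num) _
      (fun ω => by rw [prod_pow_delta3 i j i]; ring) _ (fun v => ?_)
      ((hmu3 i j i).add (hmu2 i j))
    rw [prod_eq_one_pair hij _ (fun m hm1 hm2 => by simp [hm1, hm2, momR])]
    norm_num [momR, hij, Ne.symm hij]
    ring
  -- third moments: pattern (i,j,j)
  have key3c : ∀ i j : Fin M, i ≠ j →
      Integrable (fun ω : (Fin M → ℝ) × (Fin M → ℕ) =>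
        (ω.2 i : ℝ) * (ω.2 j : ℝ) * (ω.2 j : ℝ)) P ∧
      (∫ ω : (Fin M → ℝ) × (Fin M → ℕ), (ω.2 i : ℝ) * (ω.2 j : ℝ) * (ω.2 j : ℝ) ∂P)
        = ∫ v, (v i * v j * v j + v i * v j) ∂μ := by
    intro i j hij
    refine key (fun m => (if m = i then 1 else 0) + ((if m = j then 1 else 0)
        + (if m = j then 1 else 0)))
      (fun m => by split <;> split <;> norm_num) _
      (fun ω => by rw [prod_pow_delta3 i j j]; ring) _ (fun v => ?_)
      ((hmu3 i j j).add (hmu2 i j))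
    rw [prod_eq_one_pair hij _ (fun m hm1 hm2 => by simp [hm1, hm2, momR])]
    norm_num [momR, hij, Ne.symm hij]
    ring
  -- third moments: pattern (i,i,i)
  have key3s : ∀ i : Fin M,
      Integrable (fun ω : (Fin M → ℝ) × (Fin M → ℕ) =>
        (ω.2 i : ℝ) * (ω.2 i : ℝ) * (ω.2 i : ℝ)) P ∧
      (∫ ω : (Fin M → ℝ) × (Fin M → ℕ), (ω.2 i : ℝ) * (ω.2 i : ℝ) * (ω.2 i : ℝ) ∂P)
        = ∫ v, (v i * v i * v i + 3 * (v i * v i) + v i) ∂μ := by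
    intro i
    refine key (fun m => (if m = i then 1 else 0) + ((if m = i then 1 else 0)
        + (if m = i then 1 else 0)))
      (fun m => by split <;> norm_num) _
      (fun ω => by rw [prod_pow_delta3 i i i]; ring) _ (fun v => ?_)
      (((hmu3 i i i).add ((hmu2 i i).const_mul 3)).add (hmu1 i))
    rw [prod_eq_one_single i _ (fun m hm => by simp [hm, momR])]
    norm_num [momR]
    ring
  -- y-side transfer
  have yint : ∀ F : (Fin M → ℝ) → ℝ, Measurable F → Integrable F μ →
      Integrable (fun ω : (Fin M → ℝ) × (Fin M → ℕ) => F ω.1) P := by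
    intro F hF hFi
    rw [← hPfst] at hFi
    exact (integrable_map_measure hF.aestronglyMeasurable measurable_fst.aemeasurable).mp hFi
  have yeq : ∀ F : (Fin M → ℝ) → ℝ, Measurable F →
      (∫ ω : (Fin M → ℝ) × (Fin M → ℕ), F ω.1 ∂P) = ∫ v, F v ∂μ := by
    intro F hF
    conv_rhs => rw [← hPfst]
    rw [integral_map measurable_fst.aemeasurable hF.aestronglyMeasurable]
  have ym1 : ∀ i, Measurable fun v : Fin M → ℝ => v i := fun i => measurable_pi_apply i
  have yint1 : ∀ i, Integrable (fun ω : (Fin M → ℝ) × (Fin M → ℕ) => ω.1 i) P :=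
    fun i => yint _ (ym1 i) (hmu1 i)
  have yint2 : ∀ i j, Integrable (fun ω : (Fin M → ℝ) × (Fin M → ℕ) => ω.1 i * ω.1 j) P :=
    fun i j => yint _ ((ym1 i).mul (ym1 j)) (hmu2 i j)
  have yint3 : ∀ i j k,
      Integrable (fun ω : (Fin M → ℝ) × (Fin M → ℕ) => ω.1 i * ω.1 j * ω.1 k) P :=
    fun i j k => yint _ (((ym1 i).mul (ym1 j)).mul (ym1 k)) (hmu3 i j k)
  have yeq1 : ∀ i, (∫ ω : (Fin M → ℝ) × (Fin M → ℕ), ω.1 i ∂P) = ∫ v, v i ∂μ :=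
    fun i => yeq _ (ym1 i)
  have yeq2 : ∀ i j, (∫ ω : (Fin M → ℝ) × (Fin M → ℕ), ω.1 i * ω.1 j ∂P)
      = ∫ v, v i * v j ∂μ := fun i j => yeq _ ((ym1 i).mul (ym1 j))
  have yeq3 : ∀ i j k, (∫ ω : (Fin M → ℝ) × (Fin M → ℕ), ω.1 i * ω.1 j * ω.1 k ∂P)
      = ∫ v, v i * v j * v k ∂μ := fun i j k => yeq _ (((ym1 i).mul (ym1 j)).mul (ym1 k))
  have ycum : cum3RV P (fun ω => ω.1 m1) (fun ω => ω.1 m2) (fun ω => ω.1 m3)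
      = (∫ v, v m1 * v m2 * v m3 ∂μ) - (∫ v, v m1 ∂μ) * (∫ v, v m2 * v m3 ∂μ)
        - (∫ v, v m2 ∂μ) * (∫ v, v m1 * v m3 ∂μ)
        - (∫ v, v m3 ∂μ) * (∫ v, v m1 * v m2 ∂μ)
        + 2 * (∫ v, v m1 ∂μ) * (∫ v, v m2 ∂μ) * (∫ v, v m3 ∂μ) := by
    rw [cum3_expand P _ _ _ (yint1 m1) (yint1 m2) (yint1 m3) (yint2 m1 m2) (yint2 m1 m3)
      (yint2 m2 m3) (yint3 m1 m2 m3)]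
    simp only [yeq1, yeq2, yeq3]
  by_cases h12 : m1 = m2
  · subst h12
    by_cases h13 : m1 = m3
    · subst h13
      -- all equal
      rw [cum3_expand P _ _ _ (key1 m1).1 (key1 m1).1 (key1 m1).1 (key2s m1).1 (key2s m1).1
        (key2s m1).1 (key3s m1).1, ycum,
        cov_expand P _ _ (key1 m1).1 (key1 m1).1 (key2s m1).1]
      simp only [(key1 m1).2, (key2s m1).2, (key3s m1).2, and_self, if_pos rfl, eq_self_iff_true, and_self, and_true, true_and, if_true, eq_self_iff_true, and_self, and_true, true_and, if_true]
      have Ia : Integrable (fun v : Fin M → ℝ => v m1 * v m1 * v m1 + 3 * (v m1 * v m1)) μ :=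
        (hmu3 m1 m1 m1).add ((hmu2 m1 m1).const_mul 3)
      rw [integral_add Ia (hmu1 m1),
        integral_add (hmu3 m1 m1 m1) ((hmu2 m1 m1).const_mul 3),
        integral_add (hmu2 m1 m1) (hmu1 m1), integral_const_mul]
      ring
    · -- m1 = m2 ≠ m3
      rw [cum3_expand P _ _ _ (key1 m1).1 (key1 m1).1 (key1 m3).1 (key2s m1).1
        (key2 m1 m3 h13).1 (key2 m1 m3 h13).1 (key3a m1 m3 h13).1, ycum,
        cov_expand P _ _ (key1 m1).1 (key1 m3).1 (key2 m1 m3 h13).1]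
      simp only [(key1 m1).2, (key1 m3).2, (key2s m1).2, (key2 m1 m3 h13).2,
        (key3a m1 m3 h13).2, if_pos rfl, eq_self_iff_true, and_self, and_true, true_and, if_true, if_neg h13, if_neg (fun hc : m1 = m1 ∧ m1 = m3 => h13 hc.2)]
      rw [integral_add (hmu3 m1 m1 m3) (hmu2 m1 m3), integral_add (hmu2 m1 m1) (hmu1 m1)]
      ring
  · by_cases h13 : m1 = m3
    · subst h13
      -- m1 = m3 ≠ m2
      have h21 : m2 ≠ m1 := Ne.symm h12
      rw [cum3_expand P _ _ _ (key1 m1).1 (key1 m2).1 (key1 m1).1 (key2 m1 m2 h12).1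
        (key2s m1).1 (key2 m2 m1 h21).1 (key3b m1 m2 h12).1, ycum,
        cov_expand P _ _ (key1 m1).1 (key1 m2).1 (key2 m1 m2 h12).1]
      simp only [(key1 m1).2, (key1 m2).2, (key2 m1 m2 h12).2, (key2s m1).2, (key2 m2 m1 h21).2,
        (key3b m1 m2 h12).2, if_pos rfl, eq_self_iff_true, and_self, and_true, true_and, if_true, if_neg h12, if_neg h21,
        if_neg (fun hc : m1 = m2 ∧ m2 = m1 => h12 hc.1)]
      rw [integral_add (hmu3 m1 m2 m1) (hmu2 m1 m2), integral_add (hmu2 m1 m1) (hmu1 m1)]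
      ring
    · by_cases h23 : m2 = m3
      · subst h23
        -- m2 = m3 ≠ m1
        rw [cum3_expand P _ _ _ (key1 m1).1 (key1 m2).1 (key1 m2).1 (key2 m1 m2 h12).1
          (key2 m1 m2 h12).1 (key2s m2).1 (key3c m1 m2 h12).1, ycum,
          cov_expand P _ _ (key1 m1).1 (key1 m2).1 (key2 m1 m2 h12).1]
        simp only [(key1 m1).2, (key1 m2).2, (key2 m1 m2 h12).2, (key2s m2).2,
          (key3c m1 m2 h12).2, if_pos rfl, eq_self_iff_true, and_self, and_true, true_and, if_true, if_neg h12,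
          if_neg (fun hc : m1 = m2 ∧ m2 = m2 => h12 hc.1)]
        rw [integral_add (hmu3 m1 m2 m2) (hmu2 m1 m2), integral_add (hmu2 m2 m2) (hmu1 m2)]
        ring
      · -- all distinct
        rw [cum3_expand P _ _ _ (key1 m1).1 (key1 m2).1 (key1 m3).1 (key2 m1 m2 h12).1
          (key2 m1 m3 h13).1 (key2 m2 m3 h23).1 (key3d m1 m2 m3 h12 h13 h23).1, ycum]
        simp only [(key1 m1).2, (key1 m2).2, (key1 m3).2, (key2 m1 m2 h12).2,
          (key2 m1 m3 h13).2, (key2 m2 m3 h23).2, (key3d m1 m2 m3 h12 h13 h23).2,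
          if_neg h12, if_neg h13, if_neg h23, if_neg (fun hc : m1 = m2 ∧ m2 = m3 => h12 hc.1)]
        ring
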